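/- There is an absolute constant C such that for every real x ≥ 2, ∑_{a ≤ x} ∑_{b ≤ x} d_{1/2}(a) d_{1/2}(b) / lcm(a, b) ≤ C (log x)^{5/4}. -/

import Mathlib

noncomputable section

/-- The multiplicative function `d_{1/2}`, with `d_{1/2}(p^j) = C(2j,j)/4^j`: the Dirichlet
series coefficients of `ζ(s)^{1/2}`. -/
def dHalf (n : ℕ) : ℝ :=
  if n = 0 then 0
  else ∏ p ∈ n.primeFactors,
    (Nat.choose (2 * n.factorization p) (n.factorization p) : ℝ) / 4 ^ (n.factorization p)

open Finset

local notation:10000 n "!" => Nat.factorial n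

lemma sum_le_prod_sum {α ι κ : Type*} [DecidableEq α] [DecidableEq ι] [DecidableEq κ]
    (A : Finset α) (s : Finset ι) (t : Finset κ) (F : α → ℝ) (w : ι → κ → ℝ)
    (e : α → ι → κ)
    (hw : ∀ i ∈ s, ∀ k ∈ t, 0 ≤ w i k)
    (hmem : ∀ a ∈ A, ∀ i ∈ s, e a i ∈ t)
    (hinj : ∀ a ∈ A, ∀ b ∈ A, (∀ i ∈ s, e a i = e b i) → a = b)
    (hF : ∀ a ∈ A, F a = ∏ i ∈ s, w i (e a i)) :
    ∑ a ∈ A, F a ≤ ∏ i ∈ s, ∑ k ∈ t, w i k := by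
  classical
  rw [Finset.prod_sum]
  set E : α → (∀ i ∈ s, κ) := fun a => fun i _ => e a i with hE
  have hinj' : Set.InjOn E A := by
    intro a ha b hb hab
    refine hinj a ha b hb fun i hi => ?_
    have := congrFun (congrFun hab i) hi
    exact this
  have himg : A.image E ⊆ s.pi fun _ => t := by
    intro φ hφ
    rcases Finset.mem_image.mp hφ with ⟨a, ha, rfl⟩
    rw [Finset.mem_pi]
    exact fun i hi => hmem a ha i hi
  have hsum : ∑ a ∈ A, F a = ∑ φ ∈ A.image E, ∏ x ∈ s.attach, w x.1 (φ x.1 x.2) := by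
    rw [Finset.sum_image (fun a ha b hb hab => hinj' ha hb hab)]
    refine Finset.sum_congr rfl fun a ha => ?_
    rw [hF a ha]
    rw [← Finset.prod_attach s (fun i => w i (e a i))]
  rw [hsum]
  refine Finset.sum_le_sum_of_subset_of_nonneg himg fun φ hφ _ => ?_
  refine Finset.prod_nonneg fun x _ => ?_
  rw [Finset.mem_pi] at hφ
  exact hw x.1 x.2 _ (hφ x.1 x.2)

def cc (j : ℕ) : ℝ := (Nat.choose (2 * j) j : ℝ) / 4 ^ j

lemma cc_nonneg (j : ℕ) : 0 ≤ cc j :=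
  div_nonneg (Nat.cast_nonneg _) (by positivity)

lemma cc_zero : cc 0 = 1 := by simp [cc]

lemma cc_one : cc 1 = 1 / 2 := by norm_num [cc]

lemma cc_le_one (j : ℕ) : cc j ≤ 1 := by
  rw [cc, div_le_one (by positivity)]
  have h : Nat.choose (2 * j) j ≤ 2 ^ (2 * j) := by
    calc Nat.choose (2 * j) j ≤ ∑ m ∈ range (2 * j + 1), (2 * j).choose m :=
          Finset.single_le_sum (fun i _ => Nat.zero_le _)
            (by simp [Nat.lt_succ, Nat.le_mul_of_pos_left _ two_pos])
    _ = 2 ^ (2 * j) := Nat.sum_range_choose (2 * j)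
  calc (Nat.choose (2 * j) j : ℝ) ≤ (2 : ℝ) ^ (2 * j) := by exact_mod_cast h
  _ = 4 ^ j := by rw [pow_mul]; norm_num

lemma factorization_eq_zero_of_not_mem {n p : ℕ} (hp : p ∉ n.primeFactors) :
    n.factorization p = 0 := by
  rw [← Nat.support_factorization] at hp
  exact Finsupp.notMem_support_iff.mp hp

lemma eq_prod_pow {n : ℕ} (hn : n ≠ 0) {P : Finset ℕ} (hP : n.primeFactors ⊆ P) :
    n = ∏ p ∈ P, p ^ n.factorization p := by
  conv_lhs => rw [← Nat.factorization_prod_pow_eq_self hn]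
  rw [Finsupp.prod]
  refine Finset.prod_subset (by simpa using hP) ?_
  intro p _ hp
  simp only [Nat.support_factorization] at hp
  rw [factorization_eq_zero_of_not_mem hp, pow_zero]

lemma dHalf_eq_prod {n : ℕ} (hn : n ≠ 0) {P : Finset ℕ} (hP : n.primeFactors ⊆ P) :
    dHalf n = ∏ p ∈ P, cc (n.factorization p) := by
  rw [dHalf, if_neg hn]
  exact Finset.prod_subset hP fun p _ hp => by
    simp [cc, factorization_eq_zero_of_not_mem hp]

lemma lcm_eq_prod {a b : ℕ} (ha : a ≠ 0) (hb : b ≠ 0) {P : Finset ℕ}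
    (hP : (Nat.lcm a b).primeFactors ⊆ P) :
    ((Nat.lcm a b : ℕ) : ℝ) =
      ∏ p ∈ P, (p : ℝ) ^ max (a.factorization p) (b.factorization p) := by
  have h0 : Nat.lcm a b ≠ 0 := Nat.lcm_ne_zero ha hb
  have h1 : Nat.lcm a b = ∏ p ∈ P, p ^ (Nat.lcm a b).factorization p := eq_prod_pow h0 hP
  have h2 : ∀ p, (Nat.lcm a b).factorization p = max (a.factorization p) (b.factorization p) := by
    intro p
    rw [Nat.factorization_lcm ha hb]
    rfl
  rw [h1]
  push_cast
  exact Finset.prod_congr rfl fun p _ => by rw [h2]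

lemma primeFactors_subset {n N : ℕ} (h1 : 1 ≤ n) (h2 : n ≤ N) :
    n.primeFactors ⊆ Nat.primesBelow (N + 1) := by
  intro p hp
  rw [Nat.mem_primeFactors] at hp
  rcases hp with ⟨hpp, hpd, -⟩
  rw [Nat.mem_primesBelow]
  exact ⟨Nat.lt_succ_of_le ((Nat.le_of_dvd h1 hpd).trans h2), hpp⟩

lemma step1 (N : ℕ) (hN : 2 ≤ N) :
    ∑ a ∈ Finset.Icc 1 N, ∑ b ∈ Finset.Icc 1 N, dHalf a * dHalf b / (Nat.lcm a b : ℝ)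
      ≤ ∏ p ∈ Nat.primesBelow (N + 1), ∑ k ∈ range (N + 1) ×ˢ range (N + 1),
          cc k.1 * cc k.2 / (p : ℝ) ^ (max k.1 k.2) := by
  rw [← Finset.sum_product']
  refine sum_le_prod_sum (Finset.Icc 1 N ×ˢ Finset.Icc 1 N) (Nat.primesBelow (N + 1))
    (range (N + 1) ×ˢ range (N + 1))
    (fun q => dHalf q.1 * dHalf q.2 / (Nat.lcm q.1 q.2 : ℝ))
    (fun p k => cc k.1 * cc k.2 / (p : ℝ) ^ (max k.1 k.2))
    (fun q p => (q.1.factorization p, q.2.factorization p)) ?_ ?_ ?_ ?_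
  · intro p _ k _
    exact div_nonneg (mul_nonneg (cc_nonneg _) (cc_nonneg _)) (by positivity)
  · rintro ⟨a, b⟩ hab p _
    rw [Finset.mem_product, Finset.mem_Icc, Finset.mem_Icc] at hab
    rw [Finset.mem_product, Finset.mem_range, Finset.mem_range]
    constructor
    · exact lt_of_lt_of_le (Nat.factorization_lt p (by omega)) (by omega)
    · exact lt_of_lt_of_le (Nat.factorization_lt p (by omega)) (by omega)
  · rintro ⟨a, b⟩ hab ⟨a', b'⟩ hab' h
    rw [Finset.mem_product, Finset.mem_Icc, Finset.mem_Icc] at hab hab'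
    have ha : a ≠ 0 := by omega
    have hPa : a.primeFactors ⊆ Nat.primesBelow (N + 1) :=
      primeFactors_subset (by omega) (by omega)
    have hPa' : a'.primeFactors ⊆ Nat.primesBelow (N + 1) :=
      primeFactors_subset (by omega) (by omega)
    have hPb : b.primeFactors ⊆ Nat.primesBelow (N + 1) :=
      primeFactors_subset (by omega) (by omega)
    have hPb' : b'.primeFactors ⊆ Nat.primesBelow (N + 1) :=
      primeFactors_subset (by omega) (by omega)
    have h1 : ∀ p ∈ Nat.primesBelow (N + 1), a.factorization p = a'.factorization p :=
      fun p hp => congrArg Prod.fst (h p hp)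
    have h2 : ∀ p ∈ Nat.primesBelow (N + 1), b.factorization p = b'.factorization p :=
      fun p hp => congrArg Prod.snd (h p hp)
    have ea : a = a' := by
      rw [eq_prod_pow (show a ≠ 0 by omega) hPa, eq_prod_pow (show a' ≠ 0 by omega) hPa']
      exact Finset.prod_congr rfl fun p hp => by rw [h1 p hp]
    have eb : b = b' := by
      rw [eq_prod_pow (show b ≠ 0 by omega) hPb, eq_prod_pow (show b' ≠ 0 by omega) hPb']
      exact Finset.prod_congr rfl fun p hp => by rw [h2 p hp]
    simp [ea, eb]
  · rintro ⟨a, b⟩ hab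
    rw [Finset.mem_product, Finset.mem_Icc, Finset.mem_Icc] at hab
    have ha : a ≠ 0 := by omega
    have hb : b ≠ 0 := by omega
    have hlcm : (Nat.lcm a b).primeFactors ⊆ Nat.primesBelow (N + 1) := by
      intro p hp
      rw [Nat.mem_primeFactors] at hp
      rcases hp with ⟨hpp, hpd, -⟩
      have : p ∣ a * b := hpd.trans (Nat.lcm_dvd_mul a b)
      rcases hpp.dvd_mul.mp this with hd | hd
      · exact primeFactors_subset (show 1 ≤ a by omega) (show a ≤ N by omega)
          (Nat.mem_primeFactors.mpr ⟨hpp, hd, ha⟩)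
      · exact primeFactors_subset (show 1 ≤ b by omega) (show b ≤ N by omega)
          (Nat.mem_primeFactors.mpr ⟨hpp, hd, hb⟩)
    show dHalf a * dHalf b / (Nat.lcm a b : ℝ) = _
    rw [dHalf_eq_prod ha (primeFactors_subset (show 1 ≤ a by omega) (show a ≤ N by omega)),
      dHalf_eq_prod hb (primeFactors_subset (show 1 ≤ b by omega) (show b ≤ N by omega)),
      lcm_eq_prod ha hb hlcm, ← Finset.prod_mul_distrib, ← Finset.prod_div_distrib]

lemma nat_succ_le_pow (i : ℕ) (hi : 2 ≤ i) : ((i : ℝ) + 1) ≤ (4 / 3) * (3 / 2) ^ i := by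
  induction i, hi using Nat.le_induction with
  | base => norm_num
  | succ n hn ih =>
    have hn' : (1 : ℝ) ≤ n := by exact_mod_cast Nat.one_le_iff_ne_zero.mpr (by omega)
    have hp : (0:ℝ) ≤ (3/2)^n := by positivity
    push_cast
    push_cast at ih
    calc ((n : ℝ) + 1 + 1) ≤ (3 / 2) * ((n : ℝ) + 1) := by nlinarith
      _ ≤ (3 / 2) * ((4 / 3) * (3 / 2) ^ n) := by nlinarith
      _ = (4 / 3) * (3 / 2) ^ (n + 1) := by ring

lemma geom_34 (M : ℕ) : ∑ i ∈ range M, ((3:ℝ) / 4) ^ i ≤ 4 := by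
  rw [geom_sum_eq (by norm_num)]
  have h : (((3:ℝ)/4)^M - 1)/((3:ℝ)/4 - 1) = 4*(1 - (3/4)^M) := by ring
  rw [h]
  have : (0:ℝ) ≤ (3/4)^M := by positivity
  linarith

lemma one_sided_bound {q : ℝ} (hq0 : 0 < q) (hq : q ≤ 1/2) (N : ℕ) :
    ∑ k ∈ range (N + 1) ×ˢ range (N + 1),
        (if 2 ≤ k.1 ∧ k.2 ≤ k.1 then q ^ k.1 else 0) ≤ 22 * q ^ 2 := by
  rw [Finset.sum_product]
  have hinner : ∀ i ∈ range (N + 1),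
      ∑ j ∈ range (N + 1), (if 2 ≤ i ∧ j ≤ i then q ^ i else 0)
        ≤ (16/3) * q ^ 2 * (3/4) ^ i := by
    intro i _
    by_cases h2 : 2 ≤ i
    · simp only [h2, true_and]
      calc ∑ j ∈ range (N+1), (if j ≤ i then q ^ i else 0)
          = ∑ j ∈ (range (N+1)).filter (fun j => j ≤ i), q ^ i :=
            (Finset.sum_filter _ _).symm
        _ = (((range (N+1)).filter (fun j => j ≤ i)).card : ℝ) * q ^ i := by
            rw [Finset.sum_const, nsmul_eq_mul]
        _ ≤ ((i:ℝ)+1) * q ^ i := by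
            have hs : (range (N+1)).filter (fun j => j ≤ i) ⊆ range (i+1) := by
              intro j hj; simp only [Finset.mem_filter, Finset.mem_range] at hj ⊢; omega
            have hc : (((range (N+1)).filter (fun j => j ≤ i)).card : ℝ) ≤ (i:ℝ) + 1 := by
              have := Finset.card_le_card hs
              rw [Finset.card_range] at this
              exact_mod_cast this
            have hqi : (0:ℝ) ≤ q ^ i := by positivity
            nlinarith
        _ ≤ (16/3) * q ^ 2 * (3/4) ^ i := by
            obtain ⟨m, rfl⟩ : ∃ m, i = m + 2 := ⟨i - 2, by omega⟩
            have h1 : ((m + 2 : ℕ) : ℝ) + 1 ≤ (4/3) * (3/2) ^ (m+2) :=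
              nat_succ_le_pow _ (by omega)
            have h2' : q ^ (m+2) ≤ (1/2 : ℝ)^m * q^2 := by
              have : q ^ m ≤ (1/2:ℝ)^m := pow_le_pow_left₀ hq0.le hq m
              have hq2 : (0:ℝ) ≤ q^2 := by positivity
              calc q ^ (m+2) = q^m * q^2 := by ring
                _ ≤ (1/2:ℝ)^m * q^2 := by nlinarith
            have key : (4/3:ℝ) * (3/2) ^ (m+2) * ((1/2:ℝ)^m * q^2)
                = (16/3) * q ^ 2 * (3/4) ^ (m+2) := by
              have hmm : (3/2:ℝ)^m * (1/2:ℝ)^m = (3/4:ℝ)^m := by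
                rw [← mul_pow]; norm_num
              have e1 : (3/2:ℝ)^(m+2) = (3/2:ℝ)^m * (9/4) := by rw [pow_add]; norm_num
              have e2 : (3/4:ℝ)^(m+2) = (3/4:ℝ)^m * (9/16) := by rw [pow_add]; norm_num
              rw [e1, e2, ← hmm]; ring
            have hpos : (0:ℝ) ≤ ((m+2:ℕ):ℝ) + 1 := by positivity
            have hpos2 : (0:ℝ) ≤ (4/3:ℝ) * (3/2) ^ (m+2) := by positivity
            have h3 : (0:ℝ) ≤ (1/2:ℝ)^m * q^2 := by positivity
            have hq2 : 0 ≤ q ^ (m+2) := by positivity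
            push_cast at h1 ⊢
            calc ((m:ℝ) + 2 + 1) * q ^ (m+2)
                ≤ ((4/3) * (3/2) ^ (m+2)) * ((1/2:ℝ)^m * q^2) := by nlinarith
              _ = (16/3) * q ^ 2 * (3/4) ^ (m+2) := by push_cast at key; linarith [key]
    · have : ∀ j ∈ range (N+1), (if 2 ≤ i ∧ j ≤ i then q ^ i else 0) = 0 := by
        intro j _; simp [h2]
      rw [Finset.sum_congr rfl this, Finset.sum_const_zero]
      positivity
  calc ∑ i ∈ range (N+1), ∑ j ∈ range (N+1), (if 2 ≤ i ∧ j ≤ i then q ^ i else 0)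
      ≤ ∑ i ∈ range (N+1), (16/3) * q ^ 2 * (3/4) ^ i := Finset.sum_le_sum hinner
    _ = (16/3) * q ^ 2 * ∑ i ∈ range (N+1), (3/4:ℝ) ^ i := by rw [Finset.mul_sum]
    _ ≤ (16/3) * q ^ 2 * 4 := by
        have := geom_34 (N+1)
        have hq2 : (0:ℝ) ≤ (16/3) * q^2 := by positivity
        nlinarith
    _ ≤ 22 * q ^ 2 := by nlinarith

lemma local_bound (p : ℕ) (hp : 2 ≤ p) (N : ℕ) (hN : 1 ≤ N) :
    ∑ k ∈ range (N + 1) ×ˢ range (N + 1), cc k.1 * cc k.2 / (p : ℝ) ^ (max k.1 k.2)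
      ≤ 1 + (5/4) * (1 / p) + 44 * (1 / p) ^ 2 := by
  have hp0 : (0:ℝ) < p := by positivity
  set q : ℝ := 1 / p with hqdef
  have hq0 : 0 < q := by positivity
  have hq : q ≤ 1/2 := by
    rw [hqdef, div_le_div_iff₀ hp0 (by norm_num)]
    have : (2:ℝ) ≤ p := by exact_mod_cast hp
    linarith
  have hterm : ∀ k : ℕ × ℕ, cc k.1 * cc k.2 / (p : ℝ) ^ (max k.1 k.2)
      = cc k.1 * cc k.2 * q ^ (max k.1 k.2) := by
    intro k
    rw [hqdef, div_pow, one_pow, mul_one_div]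
  have hA : range 2 ×ˢ range 2 ⊆ range (N + 1) ×ˢ range (N + 1) := by
    refine Finset.product_subset_product ?_ ?_ <;>
      · intro j hj; simp only [Finset.mem_range] at hj ⊢; omega
  rw [← Finset.sum_sdiff hA]
  have hAsum : ∑ k ∈ range 2 ×ˢ range 2, cc k.1 * cc k.2 / (p : ℝ) ^ (max k.1 k.2)
      = 1 + (5/4) * q := by
    have h2 : range 2 = {0, 1} := by decide
    rw [Finset.sum_product]
    rw [h2]
    simp only [Finset.sum_insert, Finset.mem_singleton, Finset.sum_singleton]
    norm_num [cc_zero, cc_one, hqdef]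
    ring
  have hrest : ∑ k ∈ (range (N + 1) ×ˢ range (N + 1)) \ (range 2 ×ˢ range 2),
      cc k.1 * cc k.2 / (p : ℝ) ^ (max k.1 k.2) ≤ 44 * q ^ 2 := by
    have hbd : ∀ k ∈ (range (N + 1) ×ˢ range (N + 1)) \ (range 2 ×ˢ range 2),
        cc k.1 * cc k.2 / (p : ℝ) ^ (max k.1 k.2)
          ≤ (if 2 ≤ k.1 ∧ k.2 ≤ k.1 then q ^ k.1 else 0)
            + (if 2 ≤ k.2 ∧ k.1 ≤ k.2 then q ^ k.2 else 0) := by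
      rintro ⟨i, j⟩ hk
      rw [Finset.mem_sdiff, Finset.mem_product, Finset.mem_range, Finset.mem_range,
        Finset.mem_product, Finset.mem_range, Finset.mem_range] at hk
      dsimp only
      have hmax : 2 ≤ max i j := by omega
      have h1 : cc i * cc j / (p : ℝ) ^ (max i j) ≤ q ^ (max i j) := by
        rw [hterm (i, j)]
        have hqm : (0:ℝ) ≤ q ^ (max i j) := by positivity
        have h12 : cc i * cc j ≤ 1 := by
          have := cc_le_one i
          have := cc_le_one j
          have := cc_nonneg i
          have := cc_nonneg j
          nlinarith
        calc cc i * cc j * q ^ (max i j) ≤ 1 * q ^ (max i j) :=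
              mul_le_mul_of_nonneg_right h12 hqm
          _ = q ^ (max i j) := one_mul _
      rcases le_total j i with hij | hij
      · have hm : max i j = i := max_eq_left hij
        rw [hm] at h1 hmax
        have hcond : 2 ≤ i ∧ j ≤ i := ⟨hmax, hij⟩
        rw [hm, if_pos hcond]
        have : (0:ℝ) ≤ (if 2 ≤ j ∧ i ≤ j then q ^ j else 0) := by positivity
        linarith
      · have hm : max i j = j := max_eq_right hij
        rw [hm] at h1 hmax
        have hcond : 2 ≤ j ∧ i ≤ j := ⟨hmax, hij⟩
        rw [hm, if_pos hcond]
        have : (0:ℝ) ≤ (if 2 ≤ i ∧ j ≤ i then q ^ i else 0) := by positivity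
        linarith
    calc ∑ k ∈ (range (N + 1) ×ˢ range (N + 1)) \ (range 2 ×ˢ range 2),
        cc k.1 * cc k.2 / (p : ℝ) ^ (max k.1 k.2)
        ≤ ∑ k ∈ (range (N + 1) ×ˢ range (N + 1)) \ (range 2 ×ˢ range 2),
          ((if 2 ≤ k.1 ∧ k.2 ≤ k.1 then q ^ k.1 else 0)
            + (if 2 ≤ k.2 ∧ k.1 ≤ k.2 then q ^ k.2 else 0)) := Finset.sum_le_sum hbd
      _ ≤ ∑ k ∈ range (N + 1) ×ˢ range (N + 1),
          ((if 2 ≤ k.1 ∧ k.2 ≤ k.1 then q ^ k.1 else 0)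
            + (if 2 ≤ k.2 ∧ k.1 ≤ k.2 then q ^ k.2 else 0)) := by
          refine Finset.sum_le_sum_of_subset_of_nonneg (Finset.sdiff_subset) ?_
          intro k _ _
          positivity
      _ = (∑ k ∈ range (N + 1) ×ˢ range (N + 1),
            (if 2 ≤ k.1 ∧ k.2 ≤ k.1 then q ^ k.1 else 0))
          + ∑ k ∈ range (N + 1) ×ˢ range (N + 1),
            (if 2 ≤ k.2 ∧ k.1 ≤ k.2 then q ^ k.2 else 0) := Finset.sum_add_distrib
      _ ≤ 22 * q ^ 2 + 22 * q ^ 2 := by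
          have h1 := one_sided_bound hq0 hq N
          have h2 : ∑ k ∈ range (N + 1) ×ˢ range (N + 1),
              (if 2 ≤ k.2 ∧ k.1 ≤ k.2 then q ^ k.2 else 0) ≤ 22 * q ^ 2 := by
            rw [Finset.sum_product, Finset.sum_comm]
            have := one_sided_bound hq0 hq N
            rw [Finset.sum_product] at this
            exact this
          linarith
      _ = 44 * q ^ 2 := by ring
  calc _ ≤ 44 * q ^ 2 + (1 + (5/4) * q) := by rw [hAsum]; linarith [hrest]
    _ = 1 + (5/4) * (1/p) + 44 * (1/p) ^ 2 := by rw [hqdef]; ring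

-- Chebyshev bound
lemma theta_le (n : ℕ) : ∑ p ∈ Nat.primesBelow (n + 1), Real.log p ≤ n * Real.log 4 := by
  have h1 : ∑ p ∈ Nat.primesBelow (n + 1), Real.log p = Real.log (primorial n) := by
    rw [primorial, Nat.primesBelow]
    rw [Nat.cast_prod, Real.log_prod]
    intro p hp
    have := (Finset.mem_filter.mp hp).2
    exact_mod_cast this.pos.ne'
  rw [h1]
  calc Real.log (primorial n) ≤ Real.log ((4:ℕ) ^ n) := by
        apply Real.log_le_log (by exact_mod_cast (primorial_pos n))
        exact_mod_cast primorial_le_4_pow n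
    _ = n * Real.log 4 := by
        push_cast
        rw [Real.log_pow]

lemma legendre_ge {p : ℕ} (hp : p.Prime) (n : ℕ) : p ^ (n / p) ∣ n ! := by
  rcases le_or_gt p n with h | h
  · rw [Nat.Prime.pow_dvd_factorial_iff hp (Nat.lt_succ_self (Nat.log p n))]
    have h1 : 1 ∈ Finset.Ico 1 (Nat.log p n + 1) := by
      rw [Finset.mem_Ico]
      exact ⟨le_refl 1, by have := Nat.log_pos hp.one_lt h; omega⟩
    calc n / p = n / p ^ 1 := by rw [pow_one]
      _ ≤ ∑ i ∈ Finset.Ico 1 (Nat.log p n + 1), n / p ^ i :=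
          Finset.single_le_sum (f := fun i => n / p ^ i) (fun i _ => Nat.zero_le _) h1
  · rw [Nat.div_eq_of_lt h, pow_zero]
    exact one_dvd _

lemma mertens1 (n : ℕ) (hn : 2 ≤ n) :
    ∑ p ∈ Nat.primesBelow (n + 1), Real.log p / p ≤ Real.log n + 2 := by
  set P := Nat.primesBelow (n + 1) with hP
  have hprime : ∀ p ∈ P, p.Prime := fun p hp => Nat.prime_of_mem_primesBelow hp
  have hple : ∀ p ∈ P, p ≤ n := fun p hp => by
    have := Nat.lt_of_mem_primesBelow hp; omega
  -- step 1 : ∑_{p ∈ P} (n/p) log p ≤ log n!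
  have hlogfact : Real.log (n !) = ∑ p ∈ (n !).primeFactors,
      ((n !).factorization p : ℝ) * Real.log p := by
    rw [Real.log_nat_eq_sum_factorization, Finsupp.sum]
    rfl
  have hsub : P ⊆ (n !).primeFactors := by
    intro p hp
    exact Nat.mem_primeFactors.mpr ⟨hprime p hp,
      Nat.dvd_factorial (hprime p hp).pos (hple p hp), Nat.factorial_ne_zero n⟩
  have hkey : ∑ p ∈ P, ((n / p : ℕ) : ℝ) * Real.log p ≤ Real.log (n !) := by
    rw [hlogfact]
    calc ∑ p ∈ P, ((n / p : ℕ) : ℝ) * Real.log p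
        ≤ ∑ p ∈ P, ((n !).factorization p : ℝ) * Real.log p := by
          refine Finset.sum_le_sum fun p hp => ?_
          have hd : n / p ≤ (n !).factorization p :=
            ((Nat.Prime.pow_dvd_iff_le_factorization (hprime p hp)
              (Nat.factorial_ne_zero n)).mp (legendre_ge (hprime p hp) n))
          have hlog : 0 ≤ Real.log p := Real.log_nonneg (by
            have := (hprime p hp).two_le; exact_mod_cast by omega)
          have : ((n / p : ℕ) : ℝ) ≤ ((n !).factorization p : ℝ) := by exact_mod_cast hd
          nlinarith
      _ ≤ ∑ p ∈ (n !).primeFactors, ((n !).factorization p : ℝ) * Real.log p := by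
          refine Finset.sum_le_sum_of_subset_of_nonneg hsub fun p hp _ => ?_
          have hp2 : 2 ≤ p := (Nat.prime_of_mem_primeFactors hp).two_le
          have hlog : 0 ≤ Real.log p := Real.log_nonneg (by exact_mod_cast by omega)
          positivity
  have hlogfact_le : Real.log (n !) ≤ n * Real.log n := by
    calc Real.log (n !) ≤ Real.log ((n : ℕ) ^ n) := by
          apply Real.log_le_log (by exact_mod_cast (Nat.factorial_pos n))
          exact_mod_cast Nat.factorial_le_pow n
      _ = n * Real.log n := by push_cast; rw [Real.log_pow]
  -- step 2 : each (n/p) ≥ n/p - 1 in ℝ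
  have hfloor : ∀ p ∈ P, (n : ℝ) / p * Real.log p - Real.log p
      ≤ ((n / p : ℕ) : ℝ) * Real.log p := by
    intro p hp
    have hp0 : 0 < p := (hprime p hp).pos
    have hmod : p * (n / p) + n % p = n := Nat.div_add_mod n p
    have hlt : n % p < p := Nat.mod_lt _ hp0
    have hpR : (0:ℝ) < p := by exact_mod_cast hp0
    have h1 : (n : ℝ) / p - 1 ≤ ((n / p : ℕ) : ℝ) := by
      rw [div_sub_one hpR.ne', div_le_iff₀ hpR]
      push_cast
      have e1 : ((p * (n / p) + n % p : ℕ) : ℝ) = (n : ℝ) := by exact_mod_cast hmod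
      have e2 : ((n % p : ℕ) : ℝ) < (p : ℝ) := by exact_mod_cast hlt
      have e3 : (0:ℝ) ≤ ((n % p : ℕ) : ℝ) := Nat.cast_nonneg _
      push_cast at e1
      nlinarith
    have hlog : 0 ≤ Real.log p := Real.log_nonneg (by
      have := (hprime p hp).two_le; exact_mod_cast by omega)
    nlinarith
  have hsum1 : ∑ p ∈ P, ((n:ℝ)/p * Real.log p - Real.log p)
      ≤ n * Real.log n := le_trans (Finset.sum_le_sum hfloor) (hkey.trans hlogfact_le)
  have htheta := theta_le n
  have hnR : (0:ℝ) < n := by exact_mod_cast by omega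
  have expand : ∑ p ∈ P, ((n:ℝ)/p * Real.log p - Real.log p)
      = n * (∑ p ∈ P, Real.log p / p) - ∑ p ∈ P, Real.log p := by
    rw [Finset.sum_sub_distrib, Finset.mul_sum]
    congr 1
    exact Finset.sum_congr rfl fun p hp => by ring
  rw [expand] at hsum1
  have hlog4 : Real.log 4 ≤ 2 := by
    have h4 : (4:ℝ) = 2^2 := by norm_num
    rw [h4, Real.log_pow]
    have := Real.log_two_lt_d9
    push_cast
    nlinarith
  have : n * (∑ p ∈ P, Real.log p / p) ≤ n * Real.log n + n * Real.log 4 := by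
    have := hsum1
    nlinarith [htheta]
  have h2 : (∑ p ∈ P, Real.log p / p) ≤ Real.log n + Real.log 4 := by
    have hh : (n:ℝ) * (∑ p ∈ P, Real.log p / p) ≤ (n:ℝ) * (Real.log n + Real.log 4) := by
      calc (n:ℝ) * (∑ p ∈ P, Real.log p / p) ≤ n * Real.log n + n * Real.log 4 := this
        _ = n * (Real.log n + Real.log 4) := by ring
    exact le_of_mul_le_mul_left hh hnR
  linarith

lemma abel_identity (a f : ℕ → ℝ) (K : ℕ) :
    ∑ n ∈ Finset.Icc 3 (K + 3), a n * f n
      = (∑ m ∈ Finset.Icc 3 (K + 3), a m) * f (K + 3)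
        + ∑ n ∈ Finset.Icc 3 (K + 2), (∑ m ∈ Finset.Icc 3 n, a m) * (f n - f (n + 1)) := by
  induction K with
  | zero => simp
  | succ K ih =>
    have h1 : ∑ n ∈ Finset.Icc 3 (K + 1 + 3), a n * f n
        = (∑ n ∈ Finset.Icc 3 (K + 3), a n * f n) + a (K + 4) * f (K + 4) := by
      have : K + 1 + 3 = (K + 3) + 1 := by omega
      rw [this, Finset.sum_Icc_succ_top (by omega)]
    have h2 : ∑ n ∈ Finset.Icc 3 (K + 1 + 2), (∑ m ∈ Finset.Icc 3 n, a m) * (f n - f (n + 1))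
        = (∑ n ∈ Finset.Icc 3 (K + 2), (∑ m ∈ Finset.Icc 3 n, a m) * (f n - f (n + 1)))
          + (∑ m ∈ Finset.Icc 3 (K + 3), a m) * (f (K + 3) - f (K + 4)) := by
      have : K + 1 + 2 = (K + 2) + 1 := by omega
      rw [this, Finset.sum_Icc_succ_top (by omega)]
    have h3 : (∑ m ∈ Finset.Icc 3 (K + 1 + 3), a m)
        = (∑ m ∈ Finset.Icc 3 (K + 3), a m) + a (K + 4) := by
      have : K + 1 + 3 = (K + 3) + 1 := by omega
      rw [this, Finset.sum_Icc_succ_top (by omega)]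
    rw [h1, h2, h3, ih]
    ring

lemma telescope_sum (h : ℕ → ℝ) (K : ℕ) :
    ∑ n ∈ Finset.Icc 3 (K + 2), (h (n + 1) - h n) = h (K + 3) - h 3 := by
  induction K with
  | zero => simp
  | succ K ih =>
    have : K + 1 + 2 = (K + 2) + 1 := by omega
    rw [this, Finset.sum_Icc_succ_top (by omega), ih]
    have h4 : K + 2 + 1 = K + 3 := by omega
    have h5 : K + 1 + 3 = K + 3 + 1 := by omega
    rw [h4, h5]
    ring

lemma inv_sq_sum (N : ℕ) (hN : 1 ≤ N) :
    ∑ n ∈ Finset.Icc 2 N, (1 : ℝ) / (n : ℝ) ^ 2 ≤ 1 - 1 / N := by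
  induction N with
  | zero => omega
  | succ N ih =>
    rcases Nat.eq_or_lt_of_le hN with h1 | h1
    · simp [← h1]
    · have hN' : 1 ≤ N := by omega
      rw [Finset.sum_Icc_succ_top (by omega)]
      have hNR : (1:ℝ) ≤ N := by exact_mod_cast hN'
      have key : (1:ℝ) / ((N:ℝ) + 1) ^ 2 ≤ 1 / N - 1 / (N + 1) := by
        rw [div_sub_div _ _ (by positivity) (by positivity)]
        rw [div_le_div_iff₀ (by positivity) (by positivity)]
        ring_nf
        nlinarith
      have := ih hN'
      push_cast
      push_cast at this
      linarith

lemma loglog_diff (n : ℕ) (hn : 3 ≤ n) :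
    1 / (((n:ℝ) + 1) * Real.log ((n:ℝ) + 1))
        ≤ Real.log (Real.log ((n:ℝ) + 1)) - Real.log (Real.log n) ∧
      Real.log (Real.log ((n:ℝ) + 1)) - Real.log (Real.log n)
        ≤ 1 / ((n:ℝ) * Real.log n) := by
  have hn3 : (3:ℝ) ≤ n := by exact_mod_cast hn
  have hd : ∀ t : ℝ, 3 ≤ t → HasDerivAt (fun s => Real.log (Real.log s))
      (1 / (t * Real.log t)) t := by
    intro t ht
    have h1 : (1:ℝ) < t := by linarith
    have hlt : 0 < Real.log t := Real.log_pos h1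
    have hd1 : HasDerivAt Real.log t⁻¹ t := Real.hasDerivAt_log (by linarith)
    have hd2 : HasDerivAt Real.log (Real.log t)⁻¹ (Real.log t) :=
      Real.hasDerivAt_log hlt.ne'
    have := hd2.comp t hd1
    have e : 1 / (t * Real.log t) = (Real.log t)⁻¹ * t⁻¹ := by rw [one_div, mul_inv]; ring
    rw [e]
    exact this
  have hcont : ContinuousOn (fun s => Real.log (Real.log s)) (Set.Icc (n:ℝ) ((n:ℝ) + 1)) := by
    intro t ht
    rcases ht with ⟨ht1, _⟩
    exact ((hd t (by linarith)).continuousAt).continuousWithinAt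
  have hlt : (n:ℝ) < (n:ℝ) + 1 := by linarith
  obtain ⟨c, hc, hceq⟩ := exists_hasDerivAt_eq_slope (fun s => Real.log (Real.log s))
    (fun t => 1 / (t * Real.log t)) hlt hcont
    (fun t ht => hd t (by rcases ht with ⟨ht1, _⟩; linarith))
  rcases hc with ⟨hc1, hc2⟩
  have hslope : Real.log (Real.log ((n:ℝ) + 1)) - Real.log (Real.log n)
      = 1 / (c * Real.log c) := by
    rw [hceq]
    simp
  have hc3 : (3:ℝ) ≤ c := by linarith
  have hlc : 0 < Real.log c := Real.log_pos (by linarith)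
  have hln : 0 < Real.log n := Real.log_pos (by linarith)
  have hln1 : 0 < Real.log ((n:ℝ) + 1) := Real.log_pos (by linarith)
  have hmono1 : (n:ℝ) * Real.log n ≤ c * Real.log c := by
    have := Real.log_le_log (by linarith : (0:ℝ) < (n:ℝ)) hc1.le
    nlinarith
  have hmono2 : c * Real.log c ≤ ((n:ℝ) + 1) * Real.log ((n:ℝ) + 1) := by
    have := Real.log_le_log (by linarith : (0:ℝ) < c) hc2.le
    nlinarith
  have hpos1 : 0 < (n:ℝ) * Real.log n := by positivity
  have hpos2 : 0 < c * Real.log c := by nlinarith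
  constructor
  · rw [hslope]
    exact one_div_le_one_div_of_le hpos2 hmono2
  · rw [hslope]
    exact one_div_le_one_div_of_le hpos1 hmono1

lemma log_ge_one {n : ℕ} (hn : 3 ≤ n) : 1 ≤ Real.log n := by
  have h1 : Real.exp 1 ≤ 3 := by
    have := Real.exp_one_lt_d9
    nlinarith
  have h2 : Real.exp 1 ≤ (n : ℝ) := by
    have : (3:ℝ) ≤ n := by exact_mod_cast hn
    linarith
  calc (1:ℝ) = Real.log (Real.exp 1) := (Real.log_exp 1).symm
    _ ≤ Real.log n := Real.log_le_log (Real.exp_pos 1) h2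

set_option maxHeartbeats 2000000 in
lemma mertens2 (N : ℕ) (hN : 2 ≤ N) :
    ∑ p ∈ Nat.primesBelow (N + 1), 1 / (p : ℝ) ≤ Real.log (Real.log N) + 10 := by
  rcases Nat.lt_or_ge N 3 with h3 | h3
  · -- N = 2
    have hN2 : N = 2 := by omega
    subst hN2
    have : Nat.primesBelow 3 = {2} := by decide
    rw [this]
    simp only [Finset.sum_singleton]
    -- 1/2 ≤ log (log 2) + 10
    have hl2 : (0.6931471803 : ℝ) < Real.log 2 := Real.log_two_gt_d9
    have key : Real.log (Real.log 2) ≥ 1 - 1 / Real.log 2 := by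
      have h0 : (0:ℝ) < Real.log 2 := by linarith
      have := Real.log_le_sub_one_of_pos (x := 1 / Real.log 2) (by positivity)
      rw [Real.log_div one_ne_zero h0.ne', Real.log_one] at this
      linarith
    have : (1:ℝ) - 1 / Real.log 2 ≥ -1 := by
      have h0 : (0:ℝ) < Real.log 2 := by linarith
      have : 1 / Real.log 2 ≤ 1 / (0.6931471803 : ℝ) := by
        apply one_div_le_one_div_of_le (by norm_num) hl2.le
      have : (1:ℝ) / (0.6931471803 : ℝ) ≤ 2 := by norm_num
      linarith [this]
    push_cast
    linarith [key, this]
  · -- N ≥ 3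
    obtain ⟨K, rfl⟩ : ∃ K, N = K + 3 := ⟨N - 3, by omega⟩
    set a : ℕ → ℝ := fun m => if m.Prime then Real.log m / m else 0 with ha
    set f : ℕ → ℝ := fun m => 1 / Real.log m with hf
    set g : ℕ → ℝ := fun m => Real.log (Real.log m) with hg
    set N := K + 3
    -- the sum over primes splits
    have hsplit : Nat.primesBelow (N + 1) = insert 2 ((Finset.Icc 3 N).filter Nat.Prime) := by
      ext p
      simp only [Nat.mem_primesBelow, Finset.mem_insert, Finset.mem_filter, Finset.mem_Icc]
      constructor
      · rintro ⟨hlt, hp⟩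
        rcases Nat.eq_or_lt_of_le hp.two_le with h | h
        · exact Or.inl h.symm
        · exact Or.inr ⟨⟨h, by omega⟩, hp⟩
      · rintro (rfl | ⟨⟨h1, h2⟩, hp⟩)
        · exact ⟨by omega, Nat.prime_two⟩
        · exact ⟨by omega, hp⟩
    have h2notin : (2:ℕ) ∉ (Finset.Icc 3 N).filter Nat.Prime := by
      simp
    have hsum : ∑ p ∈ Nat.primesBelow (N + 1), 1 / (p : ℝ)
        = 1 / 2 + ∑ n ∈ Finset.Icc 3 N, a n * f n := by
      rw [hsplit, Finset.sum_insert h2notin]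
      norm_num
      rw [Finset.sum_filter]
      refine Finset.sum_congr rfl fun n hn => ?_
      rw [Finset.mem_Icc] at hn
      by_cases hp : n.Prime
      · rw [if_pos hp, ha, hf]
        simp only [if_pos hp]
        have hln : 0 < Real.log n := by
          have := log_ge_one (n := n) (by omega)
          linarith
        rw [div_mul_div_comm, mul_one, mul_comm ((n:ℝ)) (Real.log n), ← div_div,
          div_self hln.ne', one_div]
      · rw [if_neg hp, ha, hf]
        simp [hp]
    -- partial sums bound
    have hA : ∀ n, 2 ≤ n → ∑ m ∈ Finset.Icc 3 n, a m ≤ Real.log n + 2 := by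
      intro n hn
      have h1 : ∑ m ∈ Finset.Icc 3 n, a m
          = ∑ p ∈ (Finset.Icc 3 n).filter Nat.Prime, Real.log p / p := by
        rw [Finset.sum_filter]
      rw [h1]
      refine le_trans (Finset.sum_le_sum_of_subset_of_nonneg ?_ ?_) (mertens1 n hn)
      · intro p hp
        rw [Finset.mem_filter, Finset.mem_Icc] at hp
        rw [Nat.mem_primesBelow]
        exact ⟨by omega, hp.2⟩
      · intro p hp _
        have hp2 : 2 ≤ p := (Nat.prime_of_mem_primesBelow hp).two_le
        have h1 : (1:ℝ) ≤ p := by exact_mod_cast by omega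
        exact div_nonneg (Real.log_nonneg h1) (Nat.cast_nonneg _)
    have hA0 : ∀ n, 0 ≤ ∑ m ∈ Finset.Icc 3 n, a m := by
      intro n
      refine Finset.sum_nonneg fun m hm => ?_
      rw [Finset.mem_Icc] at hm
      rw [ha]
      by_cases hp : m.Prime
      · simp only [if_pos hp]
        have h1 : (1:ℝ) ≤ m := by exact_mod_cast by omega
        exact div_nonneg (Real.log_nonneg h1) (Nat.cast_nonneg _)
      · simp [hp]
    -- Abel summation
    have habel := abel_identity a f K
    -- bound each term of the Abel sum
    have hterm : ∀ n ∈ Finset.Icc 3 (K + 2),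
        (∑ m ∈ Finset.Icc 3 n, a m) * (f n - f (n + 1))
          ≤ (g (n+1) - g n) + 1 / (n:ℝ)^2 + 2 * (f n - f (n + 1)) := by
      intro n hn
      rw [Finset.mem_Icc] at hn
      have hn3 : 3 ≤ n := hn.1
      have hln : 1 ≤ Real.log n := log_ge_one hn3
      have hln1 : 1 ≤ Real.log ((n:ℝ) + 1) := by
        have h := log_ge_one (n := n + 1) (by omega)
        push_cast at h
        exact h
      have hfd : 0 ≤ f n - f (n + 1) := by
        rw [hf]
        simp only
        have hnpos : (0:ℝ) < (n:ℝ) := by exact_mod_cast (show 0 < n by omega)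
        have hmono : Real.log n ≤ Real.log ((n:ℝ) + 1) :=
          Real.log_le_log hnpos (by linarith)
        push_cast
        have h1 : 0 < Real.log n := by linarith
        have h2 : 0 < Real.log ((n:ℝ) + 1) := by linarith
        rw [sub_nonneg]
        exact one_div_le_one_div_of_le h1 hmono
      have hstep1 : (∑ m ∈ Finset.Icc 3 n, a m) * (f n - f (n + 1))
          ≤ (Real.log n + 2) * (f n - f (n + 1)) :=
        mul_le_mul_of_nonneg_right (hA n (by omega)) hfd
      have hkey : Real.log n * (f n - f (n + 1)) ≤ (g (n+1) - g n) + 1 / (n:ℝ)^2 := by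
        have hd := loglog_diff n hn3
        have hnR : (3:ℝ) ≤ n := by exact_mod_cast hn3
        have h1 : 0 < Real.log n := by linarith
        have h2 : 0 < Real.log ((n:ℝ) + 1) := by linarith
        have hcomp : Real.log n * (f n - f (n + 1))
            = (Real.log ((n:ℝ)+1) - Real.log n) / Real.log ((n:ℝ)+1) := by
          rw [hf]
          simp only
          push_cast
          field_simp
        have hlogdiff : Real.log ((n:ℝ)+1) - Real.log n ≤ 1 / n := by
          have hrw : Real.log ((n:ℝ)+1) - Real.log n = Real.log (((n:ℝ)+1) / n) := by
            rw [Real.log_div (by linarith) (by linarith)]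
          rw [hrw]
          have := Real.log_le_sub_one_of_pos (x := ((n:ℝ)+1)/n) (by positivity)
          have he : ((n:ℝ)+1)/n - 1 = 1/n := by field_simp; ring
          linarith [he ▸ this]
        have hb1 : Real.log n * (f n - f (n + 1)) ≤ (1 / (n:ℝ)) * (1 / Real.log ((n:ℝ)+1)) := by
          rw [hcomp, div_eq_mul_one_div]
          exact mul_le_mul_of_nonneg_right hlogdiff (le_of_lt (one_div_pos.mpr h2))
        have hb2 : (1 / (n:ℝ)) * (1 / Real.log ((n:ℝ)+1))
            = (((n:ℝ)+1)/n) * (1 / (((n:ℝ)+1) * Real.log ((n:ℝ)+1))) := by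
          field_simp
        have hb3 : (((n:ℝ)+1)/n) * (1 / (((n:ℝ)+1) * Real.log ((n:ℝ)+1)))
            ≤ (g (n+1) - g n) + (1/(n:ℝ)) * (1 / ((n:ℝ) * Real.log n)) := by
          have hlow := hd.1
          have hup := hd.2
          have hgg : g (n+1) - g n = Real.log (Real.log ((n:ℝ)+1)) - Real.log (Real.log n) := by
            rw [hg]; push_cast; ring_nf
          rw [hgg]
          have hsplit2 : (((n:ℝ)+1)/n) * (1 / (((n:ℝ)+1) * Real.log ((n:ℝ)+1)))
              = (1 / (((n:ℝ)+1) * Real.log ((n:ℝ)+1)))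
                + (1/(n:ℝ)) * (1 / (((n:ℝ)+1) * Real.log ((n:ℝ)+1))) := by
            have hnpos : (0:ℝ) < (n:ℝ) := by exact_mod_cast (show 0 < n by omega)
            field_simp
          rw [hsplit2]
          have hm : (1/(n:ℝ)) * (1 / (((n:ℝ)+1) * Real.log ((n:ℝ)+1)))
              ≤ (1/(n:ℝ)) * (1 / ((n:ℝ) * Real.log n)) := by
            have hnpos : (0:ℝ) < (n:ℝ) := by exact_mod_cast (show 0 < n by omega)
            have hmul : (0:ℝ) < (n:ℝ) * Real.log n := mul_pos hnpos h1
            refine mul_le_mul_of_nonneg_left ?_ (by positivity)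
            refine one_div_le_one_div_of_le hmul ?_
            have hlog : Real.log n ≤ Real.log ((n:ℝ)+1) :=
              Real.log_le_log hnpos (by linarith)
            nlinarith
          have hlow' : 1 / (((n:ℝ)+1) * Real.log ((n:ℝ)+1))
              ≤ Real.log (Real.log ((n:ℝ)+1)) - Real.log (Real.log n) := hlow
          linarith
        have hb4 : (1/(n:ℝ)) * (1 / ((n:ℝ) * Real.log n)) ≤ 1 / (n:ℝ)^2 := by
          have h5 : (1:ℝ) / ((n:ℝ) * Real.log n) ≤ 1 / ((n:ℝ) * 1) := by
            refine one_div_le_one_div_of_le (by linarith) ?_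
            nlinarith
          calc (1/(n:ℝ)) * (1 / ((n:ℝ) * Real.log n)) ≤ (1/(n:ℝ)) * (1 / ((n:ℝ) * 1)) :=
                mul_le_mul_of_nonneg_left h5 (by positivity)
            _ = 1 / (n:ℝ)^2 := by field_simp
        calc Real.log n * (f n - f (n + 1))
            ≤ (1 / (n:ℝ)) * (1 / Real.log ((n:ℝ)+1)) := hb1
          _ = (((n:ℝ)+1)/n) * (1 / (((n:ℝ)+1) * Real.log ((n:ℝ)+1))) := hb2
          _ ≤ (g (n+1) - g n) + (1/(n:ℝ)) * (1 / ((n:ℝ) * Real.log n)) := hb3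
          _ ≤ (g (n+1) - g n) + 1 / (n:ℝ)^2 := by linarith [hb4]
      calc (∑ m ∈ Finset.Icc 3 n, a m) * (f n - f (n + 1))
          ≤ (Real.log n + 2) * (f n - f (n + 1)) := hstep1
        _ = Real.log n * (f n - f (n + 1)) + 2 * (f n - f (n + 1)) := by ring
        _ ≤ (g (n+1) - g n) + 1 / (n:ℝ)^2 + 2 * (f n - f (n + 1)) := by linarith [hkey]
    -- sum the bounds
    have hsum2 : ∑ n ∈ Finset.Icc 3 (K + 2), (∑ m ∈ Finset.Icc 3 n, a m) * (f n - f (n + 1))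
        ≤ (g N - g 3) + 1 + 2 * (f 3 - f N) := by
      have h1 : ∑ n ∈ Finset.Icc 3 (K + 2), (∑ m ∈ Finset.Icc 3 n, a m) * (f n - f (n + 1))
          ≤ ∑ n ∈ Finset.Icc 3 (K + 2),
            ((g (n+1) - g n) + 1 / (n:ℝ)^2 + 2 * (f n - f (n + 1))) :=
        Finset.sum_le_sum hterm
      have h2 : ∑ n ∈ Finset.Icc 3 (K + 2),
            ((g (n+1) - g n) + 1 / (n:ℝ)^2 + 2 * (f n - f (n + 1)))
          = (∑ n ∈ Finset.Icc 3 (K + 2), (g (n+1) - g n))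
            + (∑ n ∈ Finset.Icc 3 (K + 2), 1 / (n:ℝ)^2)
            + 2 * (∑ n ∈ Finset.Icc 3 (K + 2), (f n - f (n + 1))) := by
        rw [Finset.sum_add_distrib, Finset.sum_add_distrib, Finset.mul_sum]
      have h3 : ∑ n ∈ Finset.Icc 3 (K + 2), (g (n+1) - g n) = g N - g 3 :=
        telescope_sum g K
      have h4 : ∑ n ∈ Finset.Icc 3 (K + 2), (f n - f (n + 1)) = f 3 - f N := by
        have := telescope_sum (fun m => - f m) K
        simp only [neg_sub_neg] at this
        calc ∑ n ∈ Finset.Icc 3 (K + 2), (f n - f (n + 1))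
            = ∑ n ∈ Finset.Icc 3 (K + 2), ((-f) (n+1) - (-f) n) := by
              refine Finset.sum_congr rfl fun n _ => ?_
              simp only [Pi.neg_apply]
              ring
          _ = (-f) (K + 3) - (-f) 3 := telescope_sum (fun m => - f m) K
          _ = f 3 - f N := by simp only [Pi.neg_apply]; ring
      have h5 : ∑ n ∈ Finset.Icc 3 (K + 2), 1 / (n:ℝ)^2 ≤ 1 := by
        have hsub5 : Finset.Icc 3 (K+2) ⊆ Finset.Icc 2 (K+2) := by
          intro m hm; rw [Finset.mem_Icc] at hm ⊢; omega
        have hstep : ∑ n ∈ Finset.Icc 3 (K + 2), 1 / (n:ℝ)^2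
            ≤ ∑ n ∈ Finset.Icc 2 (K + 2), 1 / (n:ℝ)^2 :=
          Finset.sum_le_sum_of_subset_of_nonneg hsub5 (fun m _ _ => by positivity)
        have h6 := inv_sq_sum (K+2) (by omega)
        have h7 : (0:ℝ) ≤ 1/((K+2:ℕ):ℝ) := by positivity
        linarith
      calc ∑ n ∈ Finset.Icc 3 (K + 2), (∑ m ∈ Finset.Icc 3 n, a m) * (f n - f (n + 1))
          ≤ (g N - g 3) + (∑ n ∈ Finset.Icc 3 (K + 2), 1 / (n:ℝ)^2) + 2 * (f 3 - f N) := by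
            rw [h2, h3, h4] at h1; exact h1
        _ ≤ (g N - g 3) + 1 + 2 * (f 3 - f N) := by linarith [h5]
    -- finish
    have hfN : 0 ≤ f N ∧ f N ≤ 1 := by
      constructor
      · rw [hf]
        have := log_ge_one (n := N) (by omega)
        simp only
        exact le_of_lt (one_div_pos.mpr (by linarith))
      · rw [hf]
        have := log_ge_one (n := N) (by omega)
        simp only
        rw [div_le_one (by linarith)]
        linarith
    have hf3 : 0 ≤ f 3 ∧ f 3 ≤ 1 := by
      constructor
      · rw [hf]
        have := log_ge_one (n := 3) (by omega)
        simp only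
        push_cast at this ⊢
        exact le_of_lt (one_div_pos.mpr (by linarith))
      · rw [hf]
        have := log_ge_one (n := 3) (by omega)
        simp only
        rw [div_le_one (by linarith)]
        push_cast
        push_cast at this
        linarith
    have hg3 : 0 ≤ g 3 := by
      rw [hg]
      have := log_ge_one (n := 3) (by omega)
      exact Real.log_nonneg (by push_cast at this ⊢; linarith)
    have hANfN : (∑ m ∈ Finset.Icc 3 N, a m) * f N ≤ 1 + 2 * f N := by
      have h1 : (∑ m ∈ Finset.Icc 3 N, a m) * f N ≤ (Real.log N + 2) * f N :=
        mul_le_mul_of_nonneg_right (hA N (by omega)) hfN.1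
      have h2 : Real.log N * f N = 1 := by
        rw [hf]
        have := log_ge_one (n := N) (by omega)
        field_simp
      nlinarith [hfN.1, h1, h2]
    rw [hsum, habel]
    have : g N = Real.log (Real.log N) := by rw [hg]
    rw [← this]
    linarith [hsum2, hANfN, hfN.1, hfN.2, hf3.1, hf3.2, hg3]

lemma prime_inv_sq (N : ℕ) (hN : 2 ≤ N) :
    ∑ p ∈ Nat.primesBelow (N + 1), (1 / (p : ℝ)) ^ 2 ≤ 1 := by
  have hsub : Nat.primesBelow (N + 1) ⊆ Finset.Icc 2 N := by
    intro p hp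
    have h1 := Nat.prime_of_mem_primesBelow hp
    have h2 := Nat.lt_of_mem_primesBelow hp
    rw [Finset.mem_Icc]
    exact ⟨h1.two_le, by omega⟩
  have h1 : ∑ p ∈ Nat.primesBelow (N + 1), (1 / (p : ℝ)) ^ 2
      ≤ ∑ n ∈ Finset.Icc 2 N, (1 / (n : ℝ)) ^ 2 :=
    Finset.sum_le_sum_of_subset_of_nonneg hsub (fun m _ _ => by positivity)
  have h2 : ∑ n ∈ Finset.Icc 2 N, (1 / (n : ℝ)) ^ 2 = ∑ n ∈ Finset.Icc 2 N, 1 / (n:ℝ)^2 := by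
    refine Finset.sum_congr rfl fun n _ => ?_
    rw [div_pow, one_pow]
  have h3 := inv_sq_sum N (by omega)
  have h4 : (0:ℝ) ≤ 1 / (N:ℝ) := by positivity
  linarith [h1, h2 ▸ h1, h3]

/-- **Euler product bound.** `∑_{a,b ≤ x} d_{1/2}(a) d_{1/2}(b) / [a,b] ≪ (log x)^{5/4}`. -/
theorem sum_dHalf_div_lcm_le :
    ∃ C : ℝ, ∀ x : ℝ, 2 ≤ x →
      ∑ a ∈ Finset.Icc 1 ⌊x⌋₊, ∑ b ∈ Finset.Icc 1 ⌊x⌋₊,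
          dHalf a * dHalf b / (Nat.lcm a b : ℝ)
        ≤ C * Real.log x ^ ((5 : ℝ) / 4) := by
  refine ⟨Real.exp 60, ?_⟩
  intro x hx
  set N := ⌊x⌋₊ with hNdef
  have hN2 : 2 ≤ N := Nat.le_floor (by exact_mod_cast hx)
  have hx0 : (0:ℝ) ≤ x := by linarith
  have hNx : (N : ℝ) ≤ x := Nat.floor_le hx0
  have hNR : (2:ℝ) ≤ (N:ℝ) := by exact_mod_cast hN2
  have hlogN : 0 < Real.log N := Real.log_pos (by linarith)
  have hlogx : 0 < Real.log x := Real.log_pos (by linarith)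
  have hloglog : Real.log N ≤ Real.log x := Real.log_le_log (by linarith) hNx
  have P := Nat.primesBelow (N + 1)
  -- chain
  have hchain1 := step1 N hN2
  have hchain2 : ∏ p ∈ Nat.primesBelow (N + 1), ∑ k ∈ range (N + 1) ×ˢ range (N + 1),
        cc k.1 * cc k.2 / (p : ℝ) ^ (max k.1 k.2)
      ≤ ∏ p ∈ Nat.primesBelow (N + 1), Real.exp ((5/4) * (1 / p) + 44 * (1 / p) ^ 2) := by
    refine Finset.prod_le_prod ?_ ?_
    · intro p hp
      refine Finset.sum_nonneg fun k _ => ?_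
      exact div_nonneg (mul_nonneg (cc_nonneg _) (cc_nonneg _)) (by positivity)
    · intro p hp
      have hp2 : 2 ≤ p := (Nat.prime_of_mem_primesBelow hp).two_le
      refine le_trans (local_bound p hp2 N (by omega)) ?_
      have := Real.add_one_le_exp ((5/4) * (1 / (p:ℝ)) + 44 * (1 / (p:ℝ)) ^ 2)
      linarith
  have hchain3 : ∏ p ∈ Nat.primesBelow (N + 1), Real.exp ((5/4) * (1 / p) + 44 * (1 / p) ^ 2)
      = Real.exp (∑ p ∈ Nat.primesBelow (N + 1), ((5/4) * (1 / p) + 44 * (1 / p) ^ 2)) :=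
    (Real.exp_sum _ _).symm
  have hchain4 : ∑ p ∈ Nat.primesBelow (N + 1), ((5/4) * (1 / (p:ℝ)) + 44 * (1 / p) ^ 2)
      ≤ (5/4) * (Real.log (Real.log N) + 10) + 44 := by
    rw [Finset.sum_add_distrib, ← Finset.mul_sum, ← Finset.mul_sum]
    have h1 := mertens2 N hN2
    have h2 := prime_inv_sq N hN2
    nlinarith
  have hrpowN : Real.log N ^ ((5:ℝ)/4) = Real.exp (Real.log (Real.log N) * (5/4)) :=
    Real.rpow_def_of_pos hlogN _
  have hrpowx : Real.log x ^ ((5:ℝ)/4) = Real.exp (Real.log (Real.log x) * (5/4)) :=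
    Real.rpow_def_of_pos hlogx _
  have hll : Real.log (Real.log N) ≤ Real.log (Real.log x) :=
    Real.log_le_log hlogN hloglog
  calc ∑ a ∈ Finset.Icc 1 N, ∑ b ∈ Finset.Icc 1 N, dHalf a * dHalf b / (Nat.lcm a b : ℝ)
      ≤ ∏ p ∈ Nat.primesBelow (N + 1), ∑ k ∈ range (N + 1) ×ˢ range (N + 1),
          cc k.1 * cc k.2 / (p : ℝ) ^ (max k.1 k.2) := hchain1
    _ ≤ ∏ p ∈ Nat.primesBelow (N + 1), Real.exp ((5/4) * (1 / p) + 44 * (1 / p) ^ 2) := hchain2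
    _ = Real.exp (∑ p ∈ Nat.primesBelow (N + 1), ((5/4) * (1 / p) + 44 * (1 / p) ^ 2)) := hchain3
    _ ≤ Real.exp ((5/4) * (Real.log (Real.log N) + 10) + 44) := Real.exp_le_exp.mpr hchain4
    _ = Real.exp (56.5) * Real.exp (Real.log (Real.log N) * (5/4)) := by
        rw [← Real.exp_add]; ring_nf
    _ ≤ Real.exp 60 * Real.exp (Real.log (Real.log x) * (5/4)) := by
        refine mul_le_mul (Real.exp_le_exp.mpr (by norm_num)) (Real.exp_le_exp.mpr (by linarith))
          (Real.exp_pos _).le (Real.exp_pos _).le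
    _ = Real.exp 60 * Real.log x ^ ((5:ℝ)/4) := by rw [hrpowx]
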